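/- For every α ∈ (0,1] and every function u satisfying the stated conditions, there exists a positive constant C_{α,1} (depending on α and u) such that for every irrational x ∈ (0, ᾱ) and every N ≥ 0, | Σ_{n=0}^{N} β_{α,n−1}·u(x_{α,n}) − Σ_{n=0}^{N} u(1/a_{α,n+1})/q_{α,n} | < C_{α,1}. -/

import Mathlib

open Set Filter

/-- The `α`-continued fraction map `A_α(x) = |1/x − ⌊1/x + 1 − α⌋|`. -/
noncomputable def Aa (α : ℝ) (x : ℝ) : ℝ := |1 / x - ⌊1 / x + 1 - α⌋|

/-- The orbit `x_{α,n}` of `x` under `A_α` (with `x_{α,0} = x`). -/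
noncomputable def xa (α x : ℝ) (n : ℕ) : ℝ := (Aa α)^[n] x

/-- `betaP α x (n+1) = β_{α,n} = x_{α,0}⋯x_{α,n}`; `betaP α x 0 = β_{α,-1} = 1`. -/
noncomputable def betaP (α x : ℝ) (n : ℕ) : ℝ := ∏ i ∈ Finset.range n, xa α x i

/-- `aa α x n = a_{α,n+1} = ⌊1/x_{α,n} + 1 − α⌋`. -/
noncomputable def aa (α x : ℝ) (n : ℕ) : ℤ := ⌊1 / xa α x n + 1 - α⌋

/-- `ea α x n = ε_{α,n}`: `ε_{α,0} = 1` and `ε_{α,n+1} = sign(1/x_{α,n} − a_{α,n+1})`. -/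
noncomputable def ea (α x : ℝ) : ℕ → ℝ
  | 0 => 1
  | n + 1 => if 0 < 1 / xa α x n - aa α x n then 1 else -1

/-- `pa α x (n+1) = p_{α,n}`; `pa α x 0 = p_{α,-1} = 1`. -/
noncomputable def pa (α x : ℝ) : ℕ → ℝ
  | 0 => 1
  | 1 => 0
  | n + 2 => aa α x n * pa α x (n + 1) + ea α x n * pa α x n

/-- `qa α x (n+1) = q_{α,n}`; `qa α x 0 = q_{α,-1} = 0`. -/
noncomputable def qa (α x : ℝ) : ℕ → ℝ
  | 0 => 0
  | 1 => 1
  | n + 2 => aa α x n * qa α x (n + 1) + ea α x n * qa α x n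


namespace BrjunoPf

variable {α x : ℝ}

lemma abar_le_one (hα : α ∈ Set.Ioc (0 : ℝ) 1) : max α (1 - α) ≤ 1 := by
  apply max_le hα.2; linarith [hα.1]

/-- one step of the orbit invariant. -/
lemma step (hα : α ∈ Set.Ioc (0 : ℝ) 1) (h0 : 0 < x) (h1 : x ≤ max α (1 - α))
    (hirr : Irrational x) :
    0 < Aa α x ∧ Aa α x ≤ max α (1 - α) ∧ Irrational (Aa α x) := by
  have htirr : Irrational (1 / x) := by
    simpa [one_div] using hirr.inv
  set t := 1 / x with ht
  set b : ℤ := ⌊t + 1 - α⌋ with hb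
  have hfl : (b : ℝ) ≤ t + 1 - α := Int.floor_le _
  have hfl' : t + 1 - α < b + 1 := Int.lt_floor_add_one _
  have hne : t ≠ (b : ℝ) := htirr.ne_int b
  have hAa : Aa α x = |t - b| := rfl
  refine ⟨?_, ?_, ?_⟩
  · rw [hAa]; exact abs_pos.mpr (sub_ne_zero.mpr hne)
  · rw [hAa]
    rcases abs_cases (t - (b : ℝ)) with ⟨he, _⟩ | ⟨he, _⟩
    · rw [he]
      have : t - b < α := by linarith
      exact le_trans (le_of_lt this) (le_max_left _ _)
    · rw [he]
      have : -(t - b) ≤ 1 - α := by linarith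
      exact le_trans this (le_max_right _ _)
  · rw [hAa]
    rcases abs_cases (t - (b : ℝ)) with ⟨he, _⟩ | ⟨he, _⟩
    · rw [he]; exact htirr.sub_intCast b
    · rw [he]
      simpa using (htirr.intCast_sub b)

lemma xa_succ (n : ℕ) : xa α x (n + 1) = Aa α (xa α x n) := by
  simp [xa, Function.iterate_succ_apply']

/-- Orbit facts. -/
lemma orbit (hα : α ∈ Set.Ioc (0 : ℝ) 1) (hirr : Irrational x)
    (hx : x ∈ Set.Ioo 0 (max α (1 - α))) (n : ℕ) :
    0 < xa α x n ∧ xa α x n ≤ max α (1 - α) ∧ Irrational (xa α x n) := by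
  induction n with
  | zero => exact ⟨hx.1, le_of_lt hx.2, by simpa [xa] using hirr⟩
  | succ n ih =>
    rw [xa_succ]
    exact step hα ih.1 ih.2.1 ih.2.2

end BrjunoPf
namespace BrjunoPf

variable {α x : ℝ}

/-- Floor inequalities for `aa`. -/
lemma aa_le (n : ℕ) : (aa α x n : ℝ) ≤ 1 / xa α x n + 1 - α := by
  simpa [aa] using Int.floor_le (1 / xa α x n + 1 - α)

lemma lt_aa (n : ℕ) : 1 / xa α x n + 1 - α < aa α x n + 1 := by
  simpa [aa] using Int.lt_floor_add_one (1 / xa α x n + 1 - α)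

lemma one_le_aa (hα : α ∈ Set.Ioc (0 : ℝ) 1) (h0 : 0 < xa α x n)
    (h1 : xa α x n ≤ max α (1 - α)) : (1 : ℝ) ≤ (aa α x n : ℝ) := by
  have habar := abar_le_one hα
  have hx1 : xa α x n ≤ 1 := le_trans h1 habar
  have ht : 1 ≤ 1 / xa α x n := by
    rw [le_div_iff₀ h0]; linarith
  have : (1 : ℤ) ≤ aa α x n := by
    rw [aa, Int.le_floor]
    push_cast
    linarith [hα.2]
  exact_mod_cast this

lemma xa_succ_abs (n : ℕ) : xa α x (n + 1) = |1 / xa α x n - (aa α x n : ℝ)| := by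
  rw [xa_succ]; rfl

lemma ea_succ (n : ℕ) :
    ea α x (n + 1) = if 0 < 1 / xa α x n - (aa α x n : ℝ) then 1 else -1 := rfl

lemma ea_eq_one_or (n : ℕ) : ea α x n = 1 ∨ ea α x n = -1 := by
  cases n with
  | zero => left; rfl
  | succ n =>
    rw [ea_succ]
    by_cases h : 0 < 1 / xa α x n - (aa α x n : ℝ)
    · left; rw [if_pos h]
    · right; rw [if_neg h]

/-- key identity : `1/x_n = a_{n+1} + ε_{n+1} x_{n+1}`. -/
lemma one_div_eq (hirr : Irrational (xa α x n)) (h0 : 0 < xa α x n) :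
    1 / xa α x n = (aa α x n : ℝ) + ea α x (n + 1) * xa α x (n + 1) := by
  have htirr : Irrational (1 / xa α x n) := by simpa [one_div] using hirr.inv
  have hne : 1 / xa α x n - (aa α x n : ℝ) ≠ 0 :=
    sub_ne_zero.mpr (htirr.ne_int _)
  rw [xa_succ_abs, ea_succ]
  by_cases h : 0 < 1 / xa α x n - (aa α x n : ℝ)
  · rw [if_pos h, abs_of_pos h]; ring
  · have h' : 1 / xa α x n - (aa α x n : ℝ) < 0 := lt_of_le_of_ne (not_lt.mp h) hne
    rw [if_neg h, abs_of_neg h']; ring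

/-- `ε_{n+1} = -1` forces `x_{n+1} ≤ 1 - α`. -/
lemma xa_le_of_ea_neg (n : ℕ) (h : ea α x (n + 1) = -1) : xa α x (n + 1) ≤ 1 - α := by
  rw [ea_succ] at h
  by_cases hc : 0 < 1 / xa α x n - (aa α x n : ℝ)
  · rw [if_pos hc] at h; norm_num at h
  · rw [xa_succ_abs, abs_of_nonpos (not_lt.mp hc)]
    have := aa_le (α := α) (x := x) n
    linarith

/-- `ε_n = -1` (for `n ≥ 1`) forces `a` at the same index `≥ 2`. -/
lemma two_le_aa_of_ea_neg (hα : α ∈ Set.Ioc (0 : ℝ) 1) (n : ℕ)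
    (h0 : 0 < xa α x (n + 1)) (h : ea α x (n + 1) = -1) :
    (2 : ℝ) ≤ (aa α x (n + 1) : ℝ) := by
  have hle : xa α x (n + 1) ≤ 1 - α := xa_le_of_ea_neg n h
  have hα1 : α < 1 := by
    by_contra hc
    have : (1 : ℝ) ≤ α := not_lt.mp hc
    linarith
  have h1a : 0 < 1 - α := by linarith
  have hstep : (1 : ℝ) + α ≤ 1 / xa α x (n + 1) := by
    rw [le_div_iff₀ h0]
    nlinarith [mul_le_mul_of_nonneg_left hle (by linarith [hα.1] : (0:ℝ) ≤ 1 + α), sq_nonneg α]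
  have : (2 : ℤ) ≤ aa α x (n + 1) := by
    rw [aa, Int.le_floor]
    push_cast
    linarith
  exact_mod_cast this

end BrjunoPf
namespace BrjunoPf

variable {α x : ℝ}

lemma betaP_zero : betaP α x 0 = 1 := by simp [betaP]

lemma betaP_succ (n : ℕ) : betaP α x (n + 1) = betaP α x n * xa α x n := by
  simp [betaP, Finset.prod_range_succ]

lemma betaP_pos (hα : α ∈ Set.Ioc (0 : ℝ) 1) (hirr : Irrational x)
    (hx : x ∈ Set.Ioo 0 (max α (1 - α))) (n : ℕ) : 0 < betaP α x n := by
  induction n with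
  | zero => rw [betaP_zero]; norm_num
  | succ n ih => rw [betaP_succ]; exact mul_pos ih (orbit hα hirr hx n).1

lemma betaP_le_one (hα : α ∈ Set.Ioc (0 : ℝ) 1) (hirr : Irrational x)
    (hx : x ∈ Set.Ioo 0 (max α (1 - α))) (n : ℕ) : betaP α x n ≤ 1 := by
  induction n with
  | zero => rw [betaP_zero]
  | succ n ih =>
    rw [betaP_succ]
    have h := orbit hα hirr hx n
    have hx1 : xa α x n ≤ 1 := le_trans h.2.1 (abar_le_one hα)
    nlinarith [betaP_pos hα hirr hx n]

lemma qa_zero : qa α x 0 = 0 := rfl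
lemma qa_one : qa α x 1 = 1 := rfl
lemma qa_rec (n : ℕ) :
    qa α x (n + 2) = aa α x n * qa α x (n + 1) + ea α x n * qa α x n := rfl
lemma ea_zero : ea α x 0 = 1 := rfl

/-- `q` is positive and monotone. -/
lemma qa_mono (hα : α ∈ Set.Ioc (0 : ℝ) 1) (hirr : Irrational x)
    (hx : x ∈ Set.Ioo 0 (max α (1 - α))) (n : ℕ) :
    1 ≤ qa α x (n + 1) ∧ qa α x (n + 1) ≤ qa α x (n + 2) := by
  induction n with
  | zero =>
    constructor
    · rw [qa_one]
    · rw [qa_one, qa_rec, qa_zero, qa_one, ea_zero]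
      have h := orbit hα hirr hx 0
      have := one_le_aa hα h.1 h.2.1
      linarith
  | succ n ih =>
    obtain ⟨ih1, ih2⟩ := ih
    have h1 : 1 ≤ qa α x (n + 2) := le_trans ih1 ih2
    refine ⟨h1, ?_⟩
    rw [qa_rec (n + 1)]
    have horb := orbit hα hirr hx (n + 1)
    have haa : (1 : ℝ) ≤ (aa α x (n + 1) : ℝ) := one_le_aa hα horb.1 horb.2.1
    rcases ea_eq_one_or (α := α) (x := x) (n + 1) with he | he
    · rw [he]; nlinarith
    · rw [he]
      have h2 : (2 : ℝ) ≤ (aa α x (n + 1) : ℝ) := two_le_aa_of_ea_neg hα n horb.1 he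
      nlinarith

lemma qa_nonneg (hα : α ∈ Set.Ioc (0 : ℝ) 1) (hirr : Irrational x)
    (hx : x ∈ Set.Ioo 0 (max α (1 - α))) (n : ℕ) : 0 ≤ qa α x n := by
  cases n with
  | zero => rw [qa_zero]
  | succ n => linarith [(qa_mono hα hirr hx n).1]

lemma qa_le_succ (hα : α ∈ Set.Ioc (0 : ℝ) 1) (hirr : Irrational x)
    (hx : x ∈ Set.Ioo 0 (max α (1 - α))) (n : ℕ) : qa α x n ≤ qa α x (n + 1) := by
  cases n with
  | zero => rw [qa_zero, qa_one]; norm_num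
  | succ n => exact (qa_mono hα hirr hx n).2

/-- The fundamental identity `q_n β_{n-1} + ε_n q_{n-1} β_n = 1`. -/
lemma key_identity (hα : α ∈ Set.Ioc (0 : ℝ) 1) (hirr : Irrational x)
    (hx : x ∈ Set.Ioo 0 (max α (1 - α))) (n : ℕ) :
    qa α x (n + 1) * betaP α x n + ea α x n * (qa α x n * betaP α x (n + 1)) = 1 := by
  induction n with
  | zero =>
    rw [qa_zero, qa_one, betaP_zero]; ring
  | succ n ih =>
    have horb := orbit hα hirr hx n
    have h0 : 0 < xa α x n := horb.1
    have hmul : (aa α x n : ℝ) * xa α x n + ea α x (n + 1) * (xa α x n * xa α x (n + 1)) = 1 := by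
      have := one_div_eq (n := n) (α := α) (x := x) horb.2.2 h0
      have hx0 : xa α x n ≠ 0 := ne_of_gt h0
      field_simp at this
      nlinarith [this]
    rw [qa_rec, betaP_succ (n + 1), betaP_succ n]
    rw [betaP_succ n] at ih
    linear_combination (qa α x (n + 1) * betaP α x n) * hmul + ih

end BrjunoPf
namespace BrjunoPf

variable {α x : ℝ}

/-- The contraction constant. -/
noncomputable def lam (α : ℝ) : ℝ := max (α / (1 + α)) (max α (1 - α) * (1 - α))

lemma lam_nonneg (hα : α ∈ Set.Ioc (0 : ℝ) 1) : 0 ≤ lam α := by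
  have h1 : 0 ≤ α / (1 + α) := div_nonneg hα.1.le (by linarith [hα.1])
  exact le_trans h1 (le_max_left _ _)

lemma lam_lt_one (hα : α ∈ Set.Ioc (0 : ℝ) 1) : lam α < 1 := by
  apply max_lt
  · rw [div_lt_one (by linarith [hα.1])]; linarith [hα.1]
  · have h1 : max α (1 - α) ≤ 1 := abar_le_one hα
    have h2 : 0 ≤ max α (1 - α) := le_trans (le_of_lt hα.1) (le_max_left _ _)
    nlinarith [hα.1, hα.2]

/-- Pair-product contraction: `x_n x_{n+1} ≤ λ`. -/
lemma pair_bound (hα : α ∈ Set.Ioc (0 : ℝ) 1) (hirr : Irrational x)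
    (hx : x ∈ Set.Ioo 0 (max α (1 - α))) (n : ℕ) :
    xa α x n * xa α x (n + 1) ≤ lam α := by
  have horb := orbit hα hirr hx n
  have horb' := orbit hα hirr hx (n + 1)
  have h0 : 0 < xa α x n := horb.1
  have hA : (1 : ℝ) ≤ (aa α x n : ℝ) := one_le_aa hα h0 horb.2.1
  have hlt := lt_aa (α := α) (x := x) n
  have heq := one_div_eq (n := n) (α := α) (x := x) horb.2.2 h0
  rcases ea_eq_one_or (α := α) (x := x) (n + 1) with he | he
  · rw [he] at heq
    -- x_n x_{n+1} = 1 - a x_n ≤ α/(1+α)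
    have hprod : xa α x n * xa α x (n + 1) = 1 - (aa α x n : ℝ) * xa α x n := by
      have hx0 : xa α x n ≠ 0 := ne_of_gt h0
      field_simp at heq
      nlinarith [heq]
    have h1 : 1 < ((aa α x n : ℝ) + α) * xa α x n := by
      have : 1 / xa α x n < (aa α x n : ℝ) + α := by linarith
      rw [div_lt_iff₀ h0] at this
      nlinarith
    refine le_trans ?_ (le_max_left _ _)
    rw [le_div_iff₀ (by linarith [hα.1] : (0:ℝ) < 1 + α), hprod]
    have key : 0 ≤ α * ((aa α x n : ℝ) - 1) * xa α x n :=
      mul_nonneg (mul_nonneg hα.1.le (by linarith)) h0.le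
    nlinarith [key, h1]
  · have hle : xa α x (n + 1) ≤ 1 - α := xa_le_of_ea_neg n he
    have h1a : 0 < 1 - α := lt_of_lt_of_le horb'.1 hle
    refine le_trans ?_ (le_max_right _ _)
    exact mul_le_mul horb.2.1 hle horb'.1.le
      (le_trans hα.1.le (le_max_left _ _))

lemma betaP_even_le (hα : α ∈ Set.Ioc (0 : ℝ) 1) (hirr : Irrational x)
    (hx : x ∈ Set.Ioo 0 (max α (1 - α))) (M : ℕ) :
    betaP α x (2 * M) ≤ lam α ^ M := by
  induction M with
  | zero => rw [Nat.mul_zero, betaP_zero, pow_zero]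
  | succ M ih =>
    have hidx : 2 * (M + 1) = 2 * M + 1 + 1 := by ring
    rw [hidx, betaP_succ, betaP_succ, mul_assoc, pow_succ]
    apply mul_le_mul ih (pair_bound hα hirr hx (2 * M))
      (mul_nonneg (orbit hα hirr hx (2 * M)).1.le (orbit hα hirr hx (2 * M + 1)).1.le)
      (pow_nonneg (lam_nonneg hα) M)

lemma sum_betaP_even (hα : α ∈ Set.Ioc (0 : ℝ) 1) (hirr : Irrational x)
    (hx : x ∈ Set.Ioo 0 (max α (1 - α))) (M : ℕ) :
    ∑ n ∈ Finset.range (2 * M), betaP α x n ≤ 2 * ∑ k ∈ Finset.range M, lam α ^ k := by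
  induction M with
  | zero => simp
  | succ M ih =>
    have hidx : 2 * (M + 1) = 2 * M + 1 + 1 := by ring
    rw [hidx, Finset.sum_range_succ, Finset.sum_range_succ, Finset.sum_range_succ]
    have h1 : betaP α x (2 * M) ≤ lam α ^ M := betaP_even_le hα hirr hx M
    have h2 : betaP α x (2 * M + 1) ≤ lam α ^ M := by
      rw [betaP_succ]
      have hx1 : xa α x (2 * M) ≤ 1 := le_trans (orbit hα hirr hx (2 * M)).2.1 (abar_le_one hα)
      nlinarith [betaP_pos hα hirr hx (2 * M), (orbit hα hirr hx (2 * M)).1]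
    linarith [ih]

lemma sum_betaP_le (hα : α ∈ Set.Ioc (0 : ℝ) 1) (hirr : Irrational x)
    (hx : x ∈ Set.Ioo 0 (max α (1 - α))) (N : ℕ) :
    ∑ n ∈ Finset.range N, betaP α x n ≤ 2 / (1 - lam α) := by
  have hlam1 := lam_lt_one hα
  have hlam0 := lam_nonneg hα
  have step1 : ∑ n ∈ Finset.range N, betaP α x n ≤ ∑ n ∈ Finset.range (2 * N), betaP α x n := by
    apply Finset.sum_le_sum_of_subset_of_nonneg
    · apply Finset.range_subset_range.mpr; omega
    · intro i _ _; exact (betaP_pos hα hirr hx i).le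
  have step2 := sum_betaP_even hα hirr hx N
  have step3 : ∑ k ∈ Finset.range N, lam α ^ k ≤ 1 / (1 - lam α) := by
    have hne : lam α ≠ 1 := ne_of_lt hlam1
    rw [geom_sum_eq hne]
    have h3 : (lam α ^ N - 1) / (lam α - 1) = (1 - lam α ^ N) / (1 - lam α) := by
      rw [← neg_div_neg_eq]; ring_nf
    rw [h3, div_le_div_iff₀ (by linarith) (by linarith)]
    nlinarith [pow_nonneg hlam0 N]
  calc ∑ n ∈ Finset.range N, betaP α x n ≤ 2 * ∑ k ∈ Finset.range N, lam α ^ k :=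
        le_trans step1 step2
    _ ≤ 2 * (1 / (1 - lam α)) := by linarith
    _ = 2 / (1 - lam α) := by ring

end BrjunoPf
namespace BrjunoPf

/-- A function continuous on `(0,c]` with a finite limit at `0⁺` is bounded on `(0,c]`. -/
lemma bounded_on_Ioc {g : ℝ → ℝ} {c L : ℝ} (hc : 0 < c)
    (hg : ContinuousOn g (Set.Ioc 0 c))
    (hlim : Tendsto g (nhdsWithin 0 (Set.Ioi 0)) (nhds L)) :
    ∃ M : ℝ, 0 ≤ M ∧ ∀ y ∈ Set.Ioc (0 : ℝ) c, |g y| ≤ M := by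
  have h1 : {y : ℝ | dist (g y) L < 1} ∈ nhdsWithin 0 (Set.Ioi 0) :=
    (Metric.tendsto_nhds.mp hlim) 1 one_pos
  obtain ⟨δ, hδ, hsub⟩ := Metric.mem_nhdsWithin_iff.mp h1
  set δ' := min (δ / 2) c with hδ'def
  have hδ'pos : 0 < δ' := lt_min (by linarith) hc
  obtain ⟨Cb, hCb⟩ := (isCompact_Icc (a := δ') (b := c)).exists_bound_of_continuousOn
    (hg.mono (fun y hy => ⟨lt_of_lt_of_le hδ'pos hy.1, hy.2⟩))
  refine ⟨max (|L| + 1) (max Cb 0), le_trans (by positivity) (le_max_left _ _), ?_⟩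
  intro y hy
  by_cases hcase : y < δ'
  · have hmem : y ∈ Metric.ball (0 : ℝ) δ ∩ Set.Ioi 0 := by
      constructor
      · rw [Metric.mem_ball, Real.dist_eq, sub_zero, abs_of_pos hy.1]
        calc y < δ' := hcase
          _ ≤ δ / 2 := min_le_left _ _
          _ < δ := by linarith
      · exact hy.1
    have hd : dist (g y) L < 1 := hsub hmem
    rw [Real.dist_eq] at hd
    have : |g y| ≤ |g y - L| + |L| := by
      calc |g y| = |g y - L + L| := by ring_nf
        _ ≤ |g y - L| + |L| := abs_add_le _ _
    refine le_trans ?_ (le_max_left _ _)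
    linarith
  · have hmem : y ∈ Set.Icc δ' c := ⟨not_lt.mp hcase, hy.2⟩
    have := hCb y hmem
    rw [Real.norm_eq_abs] at this
    exact le_trans this (le_trans (le_max_left _ _) (le_max_right _ _))

end BrjunoPf
namespace BrjunoPf

variable {α x : ℝ}

set_option maxHeartbeats 2000000 in
/-- The per-term estimate. -/
lemma term_bound (hα : α ∈ Set.Ioc (0 : ℝ) 1) {u : ℝ → ℝ}
    (hpos : ∀ y ∈ Set.Ioc (0 : ℝ) 1, 0 < u y)
    (hdiff : DifferentiableOn ℝ u (Set.Ioo 0 1))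
    {M₁ M₂ S₁ : ℝ}
    (hM₁ : ∀ y ∈ Set.Ioc (0 : ℝ) 1, |y * u y| ≤ M₁)
    (hM₂ : ∀ y ∈ Set.Ioc (0 : ℝ) (1 + α)⁻¹, |y ^ 2 * deriv u y| ≤ M₂)
    (hS₁ : ∀ y ∈ Set.Icc (1 / 2 : ℝ) 1, |u y| ≤ S₁)
    (hirr : Irrational x) (hx : x ∈ Set.Ioo 0 (max α (1 - α))) (n : ℕ) :
    |betaP α x n * u (xa α x n) - u (((aa α x n : ℝ))⁻¹) / qa α x (n + 1)| ≤
      (S₁ + 9 / 2 * M₂ + M₁ / α) * betaP α x n := by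
  have hα0 := hα.1
  have hα1 := hα.2
  set A : ℝ := (aa α x n : ℝ) with hAdef
  set q : ℝ := qa α x (n + 1) with hqdef
  set B : ℝ := betaP α x n with hBdef
  set xn : ℝ := xa α x n with hxndef
  set xn1 : ℝ := xa α x (n + 1) with hxn1def
  clear_value A q B xn xn1
  have horb := orbit hα hirr hx n
  have horb' := orbit hα hirr hx (n + 1)
  have hxn0 : 0 < xn := hxndef ▸ horb.1
  have hxn1 : xn ≤ 1 := hxndef ▸ le_trans horb.2.1 (abar_le_one hα)
  have hxn10 : 0 < xn1 := hxn1def ▸ horb'.1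
  have hxn11 : xn1 ≤ 1 := hxn1def ▸ le_trans horb'.2.1 (abar_le_one hα)
  have hA1 : (1 : ℝ) ≤ A := hAdef ▸ one_le_aa hα horb.1 horb.2.1
  have hA0 : 0 < A := lt_of_lt_of_le one_pos hA1
  have hq1 : (1 : ℝ) ≤ q := hqdef ▸ (qa_mono hα hirr hx n).1
  have hq0 : 0 < q := lt_of_lt_of_le one_pos hq1
  have hB0 : 0 < B := hBdef ▸ betaP_pos hα hirr hx n
  have hM₁0 : 0 ≤ M₁ := le_trans (abs_nonneg _) (hM₁ 1 ⟨one_pos, le_refl 1⟩)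
  have hM₂0 : 0 ≤ M₂ := by
    refine le_trans (abs_nonneg _) (hM₂ (1 + α)⁻¹ ⟨by positivity, le_refl _⟩)
  have hS₁0 : 0 ≤ S₁ := le_trans (abs_nonneg _) (hS₁ 1 ⟨by norm_num, le_refl 1⟩)
  -- basic inequalities relating xn and A
  have hx_up : xn * (A - 1 + α) ≤ 1 := by
    have h := aa_le (α := α) (x := x) n
    have h2 : A - 1 + α ≤ 1 / xn := by rw [hAdef, hxndef]; linarith
    rw [le_div_iff₀ hxn0] at h2
    nlinarith
  have hx_low : 1 < (A + α) * xn := by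
    have h := lt_aa (α := α) (x := x) n
    have h2 : 1 / xn < A + α := by rw [hAdef, hxndef]; linarith
    rw [div_lt_iff₀ hxn0] at h2
    nlinarith
  have hxsa : xn1 = |1 / xn - A| := by
    rw [hxn1def, hxndef, hAdef]; exact xa_succ_abs n
  have hAinv_mem : A⁻¹ ∈ Set.Ioc (0 : ℝ) 1 := by
    constructor
    · positivity
    · rw [inv_le_one_iff₀]; right; exact hA1
  have hxn_mem : xn ∈ Set.Ioc (0 : ℝ) 1 := ⟨hxn0, hxn1⟩
  have hupos := hpos _ hAinv_mem
  have huxnpos := hpos _ hxn_mem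
  -- Estimate |u xn - u A⁻¹| ≤ S₁ + 9/2 M₂
  have hudiff : |u xn - u A⁻¹| ≤ S₁ + 9 / 2 * M₂ := by
    by_cases hA2 : (2 : ℝ) ≤ A
    · -- MVT case
      have hD : 0 < A - 1 + α := by linarith
      set s : Set ℝ := Set.Icc (A + 1)⁻¹ (A - 1 + α)⁻¹ with hsdef
      have hsub1 : s ⊆ Set.Ioo 0 1 := by
        intro ξ hξ
        constructor
        · exact lt_of_lt_of_le (by positivity) hξ.1
        · have hh1 : ξ ≤ (1 + α)⁻¹ := le_trans hξ.2 (inv_anti₀ (by linarith) (by linarith))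
          have hh2 : (1 + α)⁻¹ < 1 := by rw [inv_lt_one_iff₀]; right; linarith
          linarith
      have hsub2 : s ⊆ Set.Ioc 0 (1 + α)⁻¹ := by
        intro ξ hξ
        refine ⟨lt_of_lt_of_le (by positivity) hξ.1, le_trans hξ.2 ?_⟩
        exact inv_anti₀ (by linarith) (by linarith)
      have hdiffat : ∀ ξ ∈ s, DifferentiableAt ℝ u ξ := fun ξ hξ =>
        (hdiff ξ (hsub1 hξ)).differentiableAt (isOpen_Ioo.mem_nhds (hsub1 hξ))
      have hbound : ∀ ξ ∈ s, ‖deriv u ξ‖ ≤ M₂ * (A + 1) ^ 2 := by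
        intro ξ hξ
        have hξ0 : 0 < ξ := lt_of_lt_of_le (by positivity) hξ.1
        have hm := hM₂ ξ (hsub2 hξ)
        rw [abs_mul, abs_of_nonneg (by positivity : (0:ℝ) ≤ ξ ^ 2)] at hm
        have hξA : 1 ≤ ξ * (A + 1) := by
          have h := hξ.1
          rw [inv_eq_one_div, div_le_iff₀ (by linarith : (0:ℝ) < A + 1)] at h
          linarith
        rw [Real.norm_eq_abs]
        nlinarith [abs_nonneg (deriv u ξ), hm, sq_nonneg (ξ * (A + 1) - 1)]
      have hxn_s : xn ∈ s := by
        constructor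
        · rw [inv_eq_one_div, div_le_iff₀ (by linarith : (0:ℝ) < A + 1)]
          nlinarith
        · rw [inv_eq_one_div, le_div_iff₀ hD]
          nlinarith
      have hAinv_s : A⁻¹ ∈ s := by
        constructor
        · exact inv_anti₀ hA0 (by linarith)
        · exact inv_anti₀ hD (by linarith)
      have hmvt := Convex.norm_image_sub_le_of_norm_deriv_le hdiffat hbound
        (convex_Icc _ _) hAinv_s hxn_s
      rw [Real.norm_eq_abs, Real.norm_eq_abs] at hmvt
      -- |xn - A⁻¹| = xn * xn1 / A
      have hxx : xn * xn1 = |1 - A * xn| := by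
        have habs : xn * |1 / xn - A| = |xn * (1 / xn - A)| := by
          rw [abs_mul, abs_of_pos hxn0]
        rw [hxsa, habs]
        congr 1
        field_simp
      have hdist : |xn - A⁻¹| = xn * xn1 / A := by
        have he : xn - A⁻¹ = (A * xn - 1) / A := by field_simp
        rw [he, abs_div, abs_of_pos hA0, abs_sub_comm, ← hxx]
      have hfinal : M₂ * (A + 1) ^ 2 * (xn * xn1 / A) ≤ 9 / 2 * M₂ := by
        have h1 : (A + 1) ^ 2 * (xn * xn1) ≤ (A + 1) ^ 2 * xn := by
          have hh : xn * xn1 ≤ xn := by nlinarith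
          exact mul_le_mul_of_nonneg_left hh (by positivity)
        have h2 : 2 * (A + 1) ^ 2 ≤ 9 * A * (A - 1 + α) := by
          nlinarith [mul_nonneg (mul_nonneg (by norm_num : (0:ℝ) ≤ 9) hA0.le) hα0.le,
            mul_nonneg (by linarith : (0:ℝ) ≤ A - 2) (by linarith : (0:ℝ) ≤ 7 * A + 1)]
        have h3 : (A + 1) ^ 2 * xn * (A - 1 + α) ≤ (A + 1) ^ 2 := by
          nlinarith [mul_le_mul_of_nonneg_left hx_up (by positivity : (0:ℝ) ≤ (A + 1) ^ 2)]
        have h4 : (A + 1) ^ 2 * xn ≤ 9 / 2 * A := by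
          nlinarith [h3, h2, hD]
        have h5 : (A + 1) ^ 2 * (xn * xn1) ≤ 9 / 2 * A := le_trans h1 h4
        have h6 : M₂ * ((A + 1) ^ 2 * (xn * xn1)) * A⁻¹ ≤ M₂ * (9 / 2 * A) * A⁻¹ := by
          apply mul_le_mul_of_nonneg_right
            (mul_le_mul_of_nonneg_left h5 hM₂0) (by positivity)
        calc M₂ * (A + 1) ^ 2 * (xn * xn1 / A) = M₂ * ((A + 1) ^ 2 * (xn * xn1)) * A⁻¹ := by
              ring
          _ ≤ M₂ * (9 / 2 * A) * A⁻¹ := h6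
          _ = 9 / 2 * M₂ * (A * A⁻¹) := by ring
          _ = 9 / 2 * M₂ := by rw [mul_inv_cancel₀ (ne_of_gt hA0), mul_one]
      rw [hdist] at hmvt
      linarith
    · -- a = 1 case
      have hAeq : A = 1 := by
        rw [hAdef] at hA1 hA2 ⊢
        have h1 : (1 : ℤ) ≤ aa α x n := by exact_mod_cast hA1
        have h2 : aa α x n < 2 := by
          by_contra hc
          push_neg at hc
          exact hA2 (by exact_mod_cast hc)
        have h3 : aa α x n = 1 := by omega
        rw [h3]; norm_num
      rw [hAeq, inv_one]
      have hxnhalf : (1 / 2 : ℝ) ≤ xn := by nlinarith [hx_low, hAeq]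
      have hu1 := hS₁ 1 ⟨by norm_num, le_refl 1⟩
      have hu2 := hS₁ xn ⟨hxnhalf, hxn1⟩
      have hp1 := hpos 1 ⟨one_pos, le_refl 1⟩
      rcases abs_cases (u xn - u 1) with ⟨he, _⟩ | ⟨he, _⟩ <;>
        rcases abs_cases (u xn) with ⟨h1, _⟩ | ⟨h1, _⟩ <;>
        rcases abs_cases (u 1) with ⟨h2, _⟩ | ⟨h2, _⟩ <;> linarith
  -- Estimate u A⁻¹ * |B - q⁻¹| ≤ M₁/α * B
  have hq_est : u A⁻¹ * |B - q⁻¹| ≤ M₁ / α * B := by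
    have hkey := key_identity hα hirr hx n
    rw [← hqdef, ← hBdef] at hkey
    have hqle : qa α x n ≤ q := by rw [hqdef]; exact qa_le_succ hα hirr hx n
    have hqn0 : 0 ≤ qa α x n := qa_nonneg hα hirr hx n
    have hbn1 : 0 < betaP α x (n + 1) := betaP_pos hα hirr hx (n + 1)
    have habs1 : |q * B - 1| ≤ betaP α x (n + 1) * q := by
      have heq : q * B - 1 = -(ea α x n * (qa α x n * betaP α x (n + 1))) := by
        linarith [hkey]
      rw [heq, abs_neg]
      rcases ea_eq_one_or (α := α) (x := x) n with he | he <;> rw [he]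
      · rw [one_mul, abs_of_nonneg (mul_nonneg hqn0 hbn1.le)]
        nlinarith
      · rw [neg_one_mul, abs_neg, abs_of_nonneg (mul_nonneg hqn0 hbn1.le)]
        nlinarith
    have habs2 : |B - q⁻¹| ≤ betaP α x (n + 1) := by
      have heq2 : B - q⁻¹ = (q * B - 1) / q := by field_simp
      rw [heq2, abs_div, abs_of_pos hq0, div_le_iff₀ hq0]
      exact habs1
    have huA : u A⁻¹ ≤ M₁ * A := by
      have h := hM₁ A⁻¹ hAinv_mem
      rw [abs_of_pos (mul_pos (by positivity) hupos)] at h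
      calc u A⁻¹ = A * (A⁻¹ * u A⁻¹) := by
            field_simp
        _ ≤ A * M₁ := mul_le_mul_of_nonneg_left h hA0.le
        _ = M₁ * A := by ring
    have hαAx : A * xn * α ≤ 1 := by
      have hfac : 0 ≤ (A - 1) * (1 - α) * xn :=
        mul_nonneg (mul_nonneg (by linarith) (by linarith)) hxn0.le
      nlinarith [hx_up, hfac]
    have hbsucc : betaP α x (n + 1) = B * xn := by
      rw [hBdef, hxndef]; exact betaP_succ n
    calc u A⁻¹ * |B - q⁻¹| ≤ (M₁ * A) * (B * xn) := by
          apply mul_le_mul huA _ (abs_nonneg _) (by positivity)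
          rw [← hbsucc]; exact habs2
      _ = M₁ * (A * xn) * B := by ring
      _ ≤ M₁ / α * B := by
          apply mul_le_mul_of_nonneg_right _ hB0.le
          rw [div_eq_mul_inv]
          apply mul_le_mul_of_nonneg_left _ hM₁0
          rw [inv_eq_one_div, le_div_iff₀ hα0]
          exact hαAx
  -- final combination
  have hsplit : B * u xn - u A⁻¹ / q = B * (u xn - u A⁻¹) + u A⁻¹ * (B - q⁻¹) := by
    field_simp
    ring
  calc |B * u xn - u A⁻¹ / q|
      = |B * (u xn - u A⁻¹) + u A⁻¹ * (B - q⁻¹)| := by rw [hsplit]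
    _ ≤ |B * (u xn - u A⁻¹)| + |u A⁻¹ * (B - q⁻¹)| := abs_add_le _ _
    _ = B * |u xn - u A⁻¹| + u A⁻¹ * |B - q⁻¹| := by
        rw [abs_mul, abs_mul, abs_of_pos hB0, abs_of_pos hupos]
    _ ≤ B * (S₁ + 9 / 2 * M₂) + M₁ / α * B := by
        have := mul_le_mul_of_nonneg_left hudiff hB0.le
        linarith [hq_est]
    _ = (S₁ + 9 / 2 * M₂ + M₁ / α) * B := by ring

end BrjunoPf

/-- Proposition 2.1: for every `α ∈ (0,1]` and every `u` positive and `C¹` on `(0,1)`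
with `u(x) → ∞`, `x·u(x) → L₁ < ∞` and `x²·u′(x) → L₂ < ∞` as `x → 0⁺`, there is a
constant `C_{α,1} > 0` such that for every irrational `x ∈ (0, ᾱ)` and every `N ≥ 0`,
`|∑_{n=0}^{N} β_{α,n−1}·u(x_{α,n}) − ∑_{n=0}^{N} u(1/a_{α,n+1})/q_{α,n}| < C_{α,1}`. -/
theorem truncated_brjuno_close_to_q_series (α : ℝ) (hα : α ∈ Set.Ioc (0 : ℝ) 1)
    (u : ℝ → ℝ)
    (hpos : ∀ y ∈ Set.Ioc (0 : ℝ) 1, 0 < u y)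
    (hcont : ContinuousOn u (Set.Ioc 0 1))
    (hC1 : ContDiffOn ℝ 1 u (Set.Ioo 0 1))
    (htop : Tendsto u (nhdsWithin 0 (Set.Ioi 0)) atTop)
    (hxu : ∃ L : ℝ, Tendsto (fun y => y * u y) (nhdsWithin 0 (Set.Ioi 0)) (nhds L))
    (hx2u : ∃ L : ℝ, Tendsto (fun y => y ^ 2 * deriv u y) (nhdsWithin 0 (Set.Ioi 0)) (nhds L)) :
    ∃ C : ℝ, 0 < C ∧ ∀ x : ℝ, Irrational x → x ∈ Set.Ioo 0 (max α (1 - α)) → ∀ N : ℕ,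
      |∑ n ∈ Finset.range (N + 1), betaP α x n * u (xa α x n) -
        ∑ n ∈ Finset.range (N + 1), u (((aa α x n : ℝ))⁻¹) / qa α x (n + 1)| < C := by
  classical
  have hα0 := hα.1
  have hα1 := hα.2
  have hdiff : DifferentiableOn ℝ u (Set.Ioo 0 1) := hC1.differentiableOn one_ne_zero
  -- bound for y * u y on (0, 1]
  obtain ⟨L₁, hL₁⟩ := hxu
  obtain ⟨M₁, hM₁0, hM₁⟩ := BrjunoPf.bounded_on_Ioc one_pos
    (continuousOn_id.mul hcont) hL₁
  -- bound for y ^ 2 * deriv u y on (0, (1+α)⁻¹]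
  obtain ⟨L₂, hL₂⟩ := hx2u
  have hcpos : (0 : ℝ) < (1 + α)⁻¹ := by positivity
  have hc1 : (1 + α)⁻¹ < 1 := by
    rw [inv_lt_one_iff₀]; right; linarith
  have hsubc : Set.Ioc (0 : ℝ) (1 + α)⁻¹ ⊆ Set.Ioo (0 : ℝ) 1 := fun y hy =>
    ⟨hy.1, lt_of_le_of_lt hy.2 hc1⟩
  obtain ⟨M₂, hM₂0, hM₂⟩ := BrjunoPf.bounded_on_Ioc hcpos
    (((continuous_pow 2).continuousOn).mul
      ((hC1.continuousOn_deriv_of_isOpen isOpen_Ioo le_rfl).mono hsubc)) hL₂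
  -- bound for u on [1/2, 1]
  obtain ⟨S, hS⟩ := (isCompact_Icc (a := (1/2 : ℝ)) (b := 1)).exists_bound_of_continuousOn
    (hcont.mono (fun y hy => ⟨by linarith [hy.1], hy.2⟩))
  have hS' : ∀ y ∈ Set.Icc (1/2 : ℝ) 1, |u y| ≤ S := by
    intro y hy; rw [← Real.norm_eq_abs]; exact hS y hy
  have hS0 : 0 ≤ S := le_trans (abs_nonneg _) (hS' 1 ⟨by norm_num, le_refl 1⟩)
  set c₀ : ℝ := S + 9 / 2 * M₂ + M₁ / α with hc₀def
  have hc₀ : 0 ≤ c₀ := by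
    have : 0 ≤ M₁ / α := div_nonneg hM₁0 hα0.le
    rw [hc₀def]; linarith
  have hlam1 := BrjunoPf.lam_lt_one hα
  have h2l : 0 < 2 / (1 - BrjunoPf.lam α) := by
    apply div_pos (by norm_num) (by linarith)
  refine ⟨c₀ * (2 / (1 - BrjunoPf.lam α)) + 1, by positivity, ?_⟩
  intro x hirr hx N
  have hterm : ∀ n ∈ Finset.range (N + 1),
      |betaP α x n * u (xa α x n) - u (((aa α x n : ℝ))⁻¹) / qa α x (n + 1)| ≤
        c₀ * betaP α x n := by
    intro n _
    exact BrjunoPf.term_bound hα hpos hdiff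
      (fun y hy => hM₁ y hy) (fun y hy => hM₂ y hy) hS' hirr hx n
  calc |∑ n ∈ Finset.range (N + 1), betaP α x n * u (xa α x n) -
        ∑ n ∈ Finset.range (N + 1), u (((aa α x n : ℝ))⁻¹) / qa α x (n + 1)|
      = |∑ n ∈ Finset.range (N + 1),
          (betaP α x n * u (xa α x n) - u (((aa α x n : ℝ))⁻¹) / qa α x (n + 1))| := by
        rw [Finset.sum_sub_distrib]
    _ ≤ ∑ n ∈ Finset.range (N + 1),
          |betaP α x n * u (xa α x n) - u (((aa α x n : ℝ))⁻¹) / qa α x (n + 1)| :=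
        Finset.abs_sum_le_sum_abs _ _
    _ ≤ ∑ n ∈ Finset.range (N + 1), c₀ * betaP α x n := Finset.sum_le_sum hterm
    _ = c₀ * ∑ n ∈ Finset.range (N + 1), betaP α x n := by rw [Finset.mul_sum]
    _ ≤ c₀ * (2 / (1 - BrjunoPf.lam α)) :=
        mul_le_mul_of_nonneg_left (BrjunoPf.sum_betaP_le hα hirr hx (N + 1)) hc₀
    _ < c₀ * (2 / (1 - BrjunoPf.lam α)) + 1 := by linarith
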